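/- Let F be a field and let u ∈ F((x⁻¹)) be algebraic of degree 3 over F(x), i.e., u satisfies an irreducible cubic equation with coefficients in F[x]. If u has bounded partial quotients, then every irrational element v of the field F(x)(u) generated by u over F(x) has bounded partial quotients. -/

import Mathlib

open Polynomial
open scoped Classical

noncomputable section

namespace PaperCF

/-- The element `x` of `F((x⁻¹))`, realized as the Hahn series `T⁻¹` where `T` is the
Hahn-series variable (so a series in `x⁻¹` has well-ordered support in `T`). -/
def xx (F : Type*) [Field F] : LaurentSeries F := HahnSeries.single (-1 : ℤ) 1

/-- Embedding of the polynomial ring `F[x]` into `F((x⁻¹))`, `x ↦ xx`. -/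
def polyEmb (F : Type*) [Field F] : Polynomial F →+* LaurentSeries F :=
  (Polynomial.aeval (xx F)).toRingHom

/-- The degree of a Laurent series in `x⁻¹` (largest exponent of `x` with nonzero
coefficient), with `deg 0 = ⊥`. -/
def degB (F : Type*) [Field F] (u : LaurentSeries F) : WithBot ℤ :=
  if u = 0 then ⊥ else (-u.order : ℤ)

/-- The non-archimedean absolute value `|u| = q ^ deg u` (and `|0| = 0`). -/
def absVal (F : Type*) [Field F] (q : ℝ) (u : LaurentSeries F) : ℝ :=
  if u = 0 then 0 else q ^ (-u.order)

/-- `u` is irrational: it is not a ratio of two polynomials in `x`. -/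
def IsIrrational (F : Type*) [Field F] (u : LaurentSeries F) : Prop :=
  ∀ a b : Polynomial F, b ≠ 0 → u * polyEmb F b ≠ polyEmb F a

/-- The (necessarily unique, non-terminating) continued fraction expansion of `u`:
`p i` are the partial quotients, `U i` the complete quotients.  The condition
`0 < (U i - p i).order` says exactly that `p i` is the integral part of `U i`
(the difference has only negative powers of `x`). -/
structure CFExpansion (F : Type*) [Field F] (u : LaurentSeries F) where
  p : ℕ → Polynomial F
  U : ℕ → LaurentSeries F
  U_zero : U 0 = u
  ne : ∀ i, U i ≠ polyEmb F (p i)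
  intPart : ∀ i, 0 < (U i - polyEmb F (p i)).order
  step : ∀ i, U (i + 1) = (U i - polyEmb F (p i))⁻¹

/-- Numerators `aₙ` of the convergents: `aₙ = pₙ aₙ₋₁ + aₙ₋₂`. -/
def convNum {F : Type*} [Field F] (p : ℕ → Polynomial F) : ℕ → Polynomial F
  | 0 => p 0
  | 1 => p 1 * p 0 + 1
  | (n + 2) => p (n + 2) * convNum p (n + 1) + convNum p n

/-- Denominators `bₙ` of the convergents: `bₙ = pₙ bₙ₋₁ + bₙ₋₂`. -/
def convDen {F : Type*} [Field F] (p : ℕ → Polynomial F) : ℕ → Polynomial F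
  | 0 => 1
  | 1 => p 1
  | (n + 2) => p (n + 2) * convDen p (n + 1) + convDen p n

/-- The `n`-th convergent `cₙ = aₙ/bₙ = [p₀; p₁, …, pₙ]`. -/
def conv (F : Type*) [Field F] (p : ℕ → Polynomial F) (n : ℕ) : LaurentSeries F :=
  polyEmb F (convNum p n) / polyEmb F (convDen p n)

/-- `u` has bounded partial quotients. -/
def HasBoundedPQ (F : Type*) [Field F] (u : LaurentSeries F) : Prop :=
  ∃ cf : CFExpansion F u, ∃ N : ℕ, ∀ i, (cf.p i).natDegree ≤ N

/-- The integral part `⌊u⌋ ∈ F[x]`: the sum of the terms of `u` of nonnegative degree. -/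
def intPart (F : Type*) [Field F] (u : LaurentSeries F) : Polynomial F :=
  ∑ n ∈ Finset.Icc (0 : ℤ) (-u.order), Polynomial.monomial n.toNat (u.coeff (-n))

/-- The sequence of complete quotients produced by the continued fraction algorithm
(with junk value `0⁻¹ = 0` after termination). -/
def cqSeq (F : Type*) [Field F] (u : LaurentSeries F) : ℕ → LaurentSeries F
  | 0 => u
  | n + 1 => (cqSeq F u n - polyEmb F (intPart F (cqSeq F u n)))⁻¹


/-! ### Auxiliary lemmas -/

section Aux

variable {F : Type*} [Field F]

lemma coeff_finsum {α : Type*} (s : Finset α) (f : α → LaurentSeries F) (e : ℤ) :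
    (∑ i ∈ s, f i).coeff e = ∑ i ∈ s, (f i).coeff e :=
  map_sum (HahnSeries.coeff.addMonoidHom e) f s

lemma xx_pow (i : ℕ) : (xx F) ^ i = HahnSeries.single (-(i : ℤ)) 1 := by
  rw [xx, HahnSeries.single_pow, one_pow, nsmul_eq_mul, mul_neg_one]

lemma polyEmb_coeff (p : Polynomial F) (e : ℤ) :
    (polyEmb F p).coeff e = if e ≤ 0 then p.coeff (-e).toNat else 0 := by
  have h : polyEmb F p
      = ∑ i ∈ Finset.range (p.natDegree + 1), algebraMap F (LaurentSeries F) (p.coeff i) * (xx F) ^ i :=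
    Polynomial.eval₂_eq_sum_range _ _
  rw [h, coeff_finsum]
  have hterm : ∀ i : ℕ, (algebraMap F (LaurentSeries F) (p.coeff i) * (xx F) ^ i).coeff e
      = if e = -(i : ℤ) then p.coeff i else 0 := by
    intro i
    have hC : algebraMap F (LaurentSeries F) (p.coeff i) = HahnSeries.single (0 : ℤ) (p.coeff i) := by
      simp [HahnSeries.algebraMap_apply', ← PowerSeries.C_eq_algebraMap, HahnSeries.ofPowerSeries_C,
        HahnSeries.C_apply]
    rw [hC, xx_pow, HahnSeries.single_mul_single, zero_add, mul_one, HahnSeries.coeff_single]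
    by_cases h' : e = -(i:ℤ)
    · rw [if_pos h', if_pos h']
    · rw [if_neg h', if_neg h']
  rw [Finset.sum_congr rfl fun i _ => hterm i]
  by_cases he : e ≤ 0
  · have hek : ∀ i : ℕ, (e = -(i:ℤ)) ↔ i = (-e).toNat := by
      intro i; omega
    rw [Finset.sum_congr rfl fun i _ => by rw [if_congr (hek i) rfl rfl]]
    rw [Finset.sum_ite_eq' (Finset.range (p.natDegree + 1)) ((-e).toNat) (fun i => p.coeff i)]
    by_cases hk : (-e).toNat ∈ Finset.range (p.natDegree + 1)
    · simp [hk, he]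
    · rw [if_neg hk, if_pos he]
      rw [Finset.mem_range, not_lt] at hk
      exact (Polynomial.coeff_eq_zero_of_natDegree_lt (by omega)).symm
  · rw [if_neg he]
    apply Finset.sum_eq_zero
    intro i _
    rw [if_neg (by omega)]

lemma polyEmb_coeff_nat (p : Polynomial F) (k : ℕ) :
    (polyEmb F p).coeff (-(k : ℤ)) = p.coeff k := by
  rw [polyEmb_coeff, if_pos (by omega)]
  congr 1; omega

lemma polyEmb_eq_zero {p : Polynomial F} : polyEmb F p = 0 ↔ p = 0 := by
  constructor
  · intro h
    ext k
    have h2 := polyEmb_coeff_nat p k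
    rw [h, HahnSeries.coeff_zero] at h2
    rw [Polynomial.coeff_zero]
    exact h2.symm
  · rintro rfl; exact map_zero _

lemma polyEmb_ne_zero {p : Polynomial F} (hp : p ≠ 0) : polyEmb F p ≠ 0 :=
  fun h => hp (polyEmb_eq_zero.mp h)

lemma order_polyEmb {p : Polynomial F} (hp : p ≠ 0) :
    (polyEmb F p).order = -(p.natDegree : ℤ) := by
  have hne : polyEmb F p ≠ 0 := polyEmb_ne_zero hp
  apply le_antisymm
  · apply HahnSeries.order_le_of_coeff_ne_zero
    rw [polyEmb_coeff_nat]
    exact fun h => hp (Polynomial.leadingCoeff_eq_zero.mp h)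
  · by_contra hlt
    push_neg at hlt
    have hc := (mt HahnSeries.coeff_order_eq_zero.mp hne)
    rw [polyEmb_coeff] at hc
    by_cases ho : (polyEmb F p).order ≤ 0
    · rw [if_pos ho] at hc
      have : p.natDegree < (-(polyEmb F p).order).toNat := by omega
      exact hc (Polynomial.coeff_eq_zero_of_natDegree_lt this)
    · rw [if_neg ho] at hc; exact hc rfl

lemma order_polyEmb_nonpos {p : Polynomial F} (hp : p ≠ 0) : (polyEmb F p).order ≤ 0 := by
  rw [order_polyEmb hp]; omega

lemma order_inv {u : LaurentSeries F} (hu : u ≠ 0) : (u⁻¹).order = -u.order := by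
  have h1 : u⁻¹ * u = 1 := inv_mul_cancel₀ hu
  have := HahnSeries.order_mul (inv_ne_zero hu) hu
  rw [h1, HahnSeries.order_one] at this
  omega

lemma order_add_left {x y : LaurentSeries F} (hx : x ≠ 0) (hy : y ≠ 0)
    (h : x.order < y.order) : x + y ≠ 0 ∧ (x + y).order = x.order := by
  have hot : x.orderTop < y.orderTop := by
    rw [← HahnSeries.order_eq_orderTop_of_ne_zero hx, ← HahnSeries.order_eq_orderTop_of_ne_zero hy]
    exact_mod_cast h
  have heq := HahnSeries.orderTop_add_eq_left hot
  have hne : x + y ≠ 0 := by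
    intro h0
    rw [h0, HahnSeries.orderTop_zero, ← HahnSeries.order_eq_orderTop_of_ne_zero hx] at heq
    exact (WithTop.coe_ne_top heq.symm)
  refine ⟨hne, ?_⟩
  rw [← HahnSeries.order_eq_orderTop_of_ne_zero hne, ← HahnSeries.order_eq_orderTop_of_ne_zero hx] at heq
  exact_mod_cast heq

end Aux
section Aux2

variable {F : Type*} [Field F]

lemma polyEmb_monomial (k : ℕ) (c : F) :
    polyEmb F (Polynomial.monomial k c) = HahnSeries.single (-(k : ℤ)) c := by
  ext e
  rw [polyEmb_coeff, HahnSeries.coeff_single]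
  by_cases h : e = -(k : ℤ)
  · rw [if_pos h, if_pos (by omega), Polynomial.coeff_monomial, if_pos (by omega)]
  · rw [if_neg h]
    by_cases he : e ≤ 0
    · rw [if_pos he, Polynomial.coeff_monomial, if_neg (by omega)]
    · rw [if_neg he]

lemma sub_intPart_coeff (u : LaurentSeries F) {e : ℤ} (he : e ≤ 0) :
    (u - polyEmb F (intPart F u)).coeff e = 0 := by
  rw [HahnSeries.coeff_sub, intPart, map_sum, coeff_finsum]
  have hterm : ∀ n ∈ Finset.Icc (0 : ℤ) (-u.order),
      (polyEmb F (Polynomial.monomial n.toNat (u.coeff (-n)))).coeff e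
        = if n = -e then u.coeff e else 0 := by
    intro n hn
    rw [Finset.mem_Icc] at hn
    rw [polyEmb_monomial, HahnSeries.coeff_single]
    by_cases h : n = -e
    · rw [if_pos (show e = -(n.toNat : ℤ) by omega), if_pos h]
      congr 1
      omega
    · by_cases h2 : e = -(n.toNat : ℤ)
      · exact absurd (by omega) h
      · rw [if_neg h2, if_neg h]
  rw [Finset.sum_congr rfl hterm,
    Finset.sum_ite_eq' (Finset.Icc (0:ℤ) (-u.order)) (-e) (fun _ => u.coeff e)]
  by_cases hm : -e ∈ Finset.Icc (0:ℤ) (-u.order)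
  · rw [if_pos hm, sub_self]
  · rw [if_neg hm, sub_zero]
    rw [Finset.mem_Icc] at hm
    exact HahnSeries.coeff_eq_zero_of_lt_order (by omega)

lemma intPart_spec (u : LaurentSeries F) (h : u ≠ polyEmb F (intPart F u)) :
    0 < (u - polyEmb F (intPart F u)).order := by
  by_contra hle
  push_neg at hle
  have hne : u - polyEmb F (intPart F u) ≠ 0 := sub_ne_zero.mpr h
  exact (mt HahnSeries.coeff_order_eq_zero.mp hne) (sub_intPart_coeff u hle)

lemma irr_ne_zero {v : LaurentSeries F} (hv : IsIrrational F v) : v ≠ 0 := by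
  have h := hv 0 1 one_ne_zero
  rw [map_one, map_zero, mul_one] at h
  exact h

lemma irr_ne_polyEmb {v : LaurentSeries F} (hv : IsIrrational F v) (q : Polynomial F) :
    v ≠ polyEmb F q :=
  fun h => hv q 1 one_ne_zero (by rw [map_one, mul_one, h])

lemma irr_sub {v : LaurentSeries F} (hv : IsIrrational F v) (q : Polynomial F) :
    IsIrrational F (v - polyEmb F q) := by
  intro a b hb heq
  apply hv (a + q * b) b hb
  rw [map_add, map_mul]
  rw [sub_mul] at heq
  linear_combination heq

lemma irr_inv {v : LaurentSeries F} (hv : IsIrrational F v) : IsIrrational F v⁻¹ := by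
  intro a b hb heq
  have hv0 := irr_ne_zero hv
  have ha : a ≠ 0 := by
    rintro rfl
    rw [map_zero] at heq
    exact (mul_ne_zero (inv_ne_zero hv0) (polyEmb_ne_zero hb)) heq
  apply hv b a ha
  have h2 := congrArg (fun t => v * t) heq
  rw [← mul_assoc, mul_inv_cancel₀ hv0, one_mul] at h2
  exact h2.symm

lemma cq_irr {v : LaurentSeries F} (hv : IsIrrational F v) :
    ∀ n, IsIrrational F (cqSeq F v n)
  | 0 => hv
  | (n + 1) => irr_inv (irr_sub (cq_irr hv n) _)

/-- The canonical continued-fraction expansion of an irrational Laurent series. -/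
def mkCF (v : LaurentSeries F) (hv : IsIrrational F v) : CFExpansion F v where
  p i := intPart F (cqSeq F v i)
  U := cqSeq F v
  U_zero := rfl
  ne i := irr_ne_polyEmb (cq_irr hv i) _
  intPart i := intPart_spec _ (irr_ne_polyEmb (cq_irr hv i) _)
  step i := rfl

end Aux2
section CFTheory

variable {F : Type*} [Field F] {w : LaurentSeries F}

/-- Shifted error terms: `EE 0 = -1`, `EE (n+1) = bₙ w - aₙ`. -/
def EE (cf : CFExpansion F w) : ℕ → LaurentSeries F
  | 0 => -1
  | (n + 1) => polyEmb F (convDen cf.p n) * w - polyEmb F (convNum cf.p n)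

/-- Degree of the `i`-th complete quotient. -/
def dU (cf : CFExpansion F w) (i : ℕ) : ℤ := -(cf.U i).order

/-- `SB n = Σ_{i=1}^n deg Uᵢ`, the degree of the denominator `bₙ`. -/
def SB (cf : CFExpansion F w) (n : ℕ) : ℤ := ∑ i ∈ Finset.range n, dU cf (i + 1)

variable (cf : CFExpansion F w)

lemma U_sub_ne (i : ℕ) : cf.U i - polyEmb F (cf.p i) ≠ 0 := sub_ne_zero.mpr (cf.ne i)

lemma U_succ_ne (i : ℕ) : cf.U (i + 1) ≠ 0 := by
  rw [cf.step]; exact inv_ne_zero (U_sub_ne cf i)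

lemma order_U_succ (i : ℕ) :
    (cf.U (i + 1)).order = -(cf.U i - polyEmb F (cf.p i)).order := by
  rw [cf.step]; exact order_inv (U_sub_ne cf i)

lemma dU_pos (i : ℕ) : 1 ≤ dU cf (i + 1) := by
  have h1 := cf.intPart i
  have h2 := order_U_succ cf i
  rw [dU, h2]; omega

lemma p_succ_spec (i : ℕ) :
    cf.p (i + 1) ≠ 0 ∧ ((cf.p (i + 1)).natDegree : ℤ) = dU cf (i + 1) := by
  have h1 : (cf.U (i+1)).order = -(dU cf (i+1)) := by rw [dU]; ring
  have h2 : 1 ≤ dU cf (i+1) := dU_pos cf i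
  have hx : cf.U (i + 1) ≠ 0 := U_succ_ne cf i
  have hy : -(cf.U (i+1) - polyEmb F (cf.p (i+1))) ≠ 0 := neg_ne_zero.mpr (U_sub_ne cf (i+1))
  have hord : (cf.U (i+1)).order < (-(cf.U (i+1) - polyEmb F (cf.p (i+1)))).order := by
    rw [HahnSeries.order_neg]
    have := cf.intPart (i + 1)
    omega
  obtain ⟨hne, heq⟩ := order_add_left hx hy hord
  have hP : cf.U (i+1) + -(cf.U (i+1) - polyEmb F (cf.p (i+1))) = polyEmb F (cf.p (i+1)) := by
    ring
  rw [hP] at hne heq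
  have hp0 : cf.p (i+1) ≠ 0 := fun h => hne (by rw [h, map_zero])
  refine ⟨hp0, ?_⟩
  rw [order_polyEmb hp0] at heq
  omega

lemma EE_rec (n : ℕ) :
    EE cf (n + 2) = polyEmb F (cf.p (n + 1)) * EE cf (n + 1) + EE cf n := by
  rcases n with _ | n
  · show polyEmb F (convDen cf.p 1) * w - polyEmb F (convNum cf.p 1)
      = polyEmb F (cf.p 1) * (polyEmb F (convDen cf.p 0) * w - polyEmb F (convNum cf.p 0)) + (-1)
    rw [show convDen cf.p 1 = cf.p 1 from rfl, show convNum cf.p 1 = cf.p 1 * cf.p 0 + 1 from rfl,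
      show convDen cf.p 0 = 1 from rfl, show convNum cf.p 0 = cf.p 0 from rfl]
    push_cast [map_add, map_mul, map_one]
    ring
  · show polyEmb F (convDen cf.p (n+2)) * w - polyEmb F (convNum cf.p (n+2))
      = polyEmb F (cf.p (n+2)) * (polyEmb F (convDen cf.p (n+1)) * w - polyEmb F (convNum cf.p (n+1)))
        + (polyEmb F (convDen cf.p n) * w - polyEmb F (convNum cf.p n))
    rw [show convDen cf.p (n+2) = cf.p (n+2) * convDen cf.p (n+1) + convDen cf.p n from rfl,
      show convNum cf.p (n+2) = cf.p (n+2) * convNum cf.p (n+1) + convNum cf.p n from rfl]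
    rw [map_add, map_add, map_mul, map_mul]
    ring

lemma EE_K : ∀ n, EE cf (n + 1) * cf.U (n + 1) = - EE cf n := by
  intro n
  induction n with
  | zero =>
    have hd : cf.U 1 = (w - polyEmb F (cf.p 0))⁻¹ := by
      have := cf.step 0
      rwa [cf.U_zero] at this
    have hne : w - polyEmb F (cf.p 0) ≠ 0 := by
      have := U_sub_ne cf 0
      rwa [cf.U_zero] at this
    show (polyEmb F (convDen cf.p 0) * w - polyEmb F (convNum cf.p 0)) * cf.U 1 = -(-1)
    rw [show convDen cf.p 0 = 1 from rfl, show convNum cf.p 0 = cf.p 0 from rfl, map_one, one_mul,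
      hd, neg_neg]
    exact mul_inv_cancel₀ hne
  | succ n IH =>
    have hdiff : cf.U (n+1) - polyEmb F (cf.p (n+1)) = (cf.U (n+2))⁻¹ := by
      rw [cf.step (n+1), inv_inv]
    have hmul : (cf.U (n+1) - polyEmb F (cf.p (n+1))) * cf.U (n+2) = 1 := by
      rw [hdiff]; exact inv_mul_cancel₀ (U_succ_ne cf (n+1))
    rw [EE_rec cf n]
    linear_combination cf.U (n+2) * IH - EE cf (n+1) * hmul

lemma EE_ne : ∀ n, EE cf n ≠ 0
  | 0 => by show (-1 : LaurentSeries F) ≠ 0; simp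
  | (n + 1) => by
    intro h
    have := EE_K cf n
    rw [h, zero_mul] at this
    exact EE_ne n (neg_eq_zero.mp this.symm)

lemma order_EE : ∀ n, (EE cf n).order = SB cf n
  | 0 => by
    show (-1 : LaurentSeries F).order = 0
    rw [HahnSeries.order_neg, HahnSeries.order_one]
  | (n + 1) => by
    have hK := EE_K cf n
    have h1 : (EE cf (n+1)).order + (cf.U (n+1)).order = (EE cf n).order := by
      rw [← HahnSeries.order_mul (EE_ne cf (n+1)) (U_succ_ne cf n), hK, HahnSeries.order_neg]
    have h2 := order_EE n
    have h3 : SB cf (n+1) = SB cf n + dU cf (n+1) := Finset.sum_range_succ _ _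
    rw [dU] at h3
    omega

lemma SB_succ (n : ℕ) : SB cf (n + 1) = SB cf n + dU cf (n + 1) := Finset.sum_range_succ _ _

lemma SB_ge (n : ℕ) : (n : ℤ) ≤ SB cf n := by
  induction n with
  | zero => simp [SB]
  | succ n IH =>
    have := dU_pos cf n
    rw [SB_succ]
    push_cast
    omega

lemma poly_add_spec {P Q : Polynomial F} (hP : P ≠ 0) (h : Q.natDegree < P.natDegree) :
    P + Q ≠ 0 ∧ (P + Q).natDegree = P.natDegree := by
  refine ⟨fun h0 => ?_, Polynomial.natDegree_add_eq_left_of_natDegree_lt h⟩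
  have : Q = -P := by linear_combination h0
  rw [this, Polynomial.natDegree_neg] at h
  omega

lemma convDen_spec : ∀ n, (convDen cf.p n ≠ 0 ∧ ((convDen cf.p n).natDegree : ℤ) = SB cf n)
    ∧ (convDen cf.p (n+1) ≠ 0 ∧ ((convDen cf.p (n+1)).natDegree : ℤ) = SB cf (n+1)) := by
  intro n
  induction n with
  | zero =>
    constructor
    · exact ⟨one_ne_zero, by simp [SB, show convDen cf.p 0 = 1 from rfl]⟩
    · obtain ⟨h1, h2⟩ := p_succ_spec cf 0
      refine ⟨h1, ?_⟩
      rw [show convDen cf.p 1 = cf.p 1 from rfl, h2, SB_succ]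
      simp [SB]
  | succ n IH =>
    obtain ⟨⟨hbn, hdn⟩, ⟨hbn1, hdn1⟩⟩ := IH
    refine ⟨⟨hbn1, hdn1⟩, ?_⟩
    obtain ⟨hp, hdp⟩ := p_succ_spec cf (n+1)
    have hPne : cf.p (n+2) * convDen cf.p (n+1) ≠ 0 := mul_ne_zero hp hbn1
    have hdeg : (convDen cf.p n).natDegree < (cf.p (n+2) * convDen cf.p (n+1)).natDegree := by
      rw [Polynomial.natDegree_mul hp hbn1]
      have h1 := dU_pos cf n
      have h2 := dU_pos cf (n+1)
      have h3 := SB_succ cf n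
      have h4 := SB_succ cf (n+1)
      omega
    obtain ⟨hne, hdeq⟩ := poly_add_spec hPne hdeg
    refine ⟨by rwa [show convDen cf.p (n+2) = cf.p (n+2) * convDen cf.p (n+1) + convDen cf.p n from rfl], ?_⟩
    rw [show convDen cf.p (n+2) = cf.p (n+2) * convDen cf.p (n+1) + convDen cf.p n from rfl, hdeq,
      Polynomial.natDegree_mul hp hbn1]
    have h4 := SB_succ cf (n+1)
    push_cast
    omega

lemma delta : ∀ n, convNum cf.p (n+1) * convDen cf.p n - convNum cf.p n * convDen cf.p (n+1)
    = (-1 : Polynomial F) ^ n := by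
  intro n
  induction n with
  | zero =>
    rw [show convNum cf.p 1 = cf.p 1 * cf.p 0 + 1 from rfl, show convDen cf.p 0 = 1 from rfl,
      show convNum cf.p 0 = cf.p 0 from rfl, show convDen cf.p 1 = cf.p 1 from rfl]
    ring
  | succ n IH =>
    rw [show convNum cf.p (n+2) = cf.p (n+2) * convNum cf.p (n+1) + convNum cf.p n from rfl,
      show convDen cf.p (n+2) = cf.p (n+2) * convDen cf.p (n+1) + convDen cf.p n from rfl,
      pow_succ]
    linear_combination (-1 : Polynomial F) * IH

end CFTheory
section MainCF

variable {F : Type*} [Field F]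

/-- `v` is badly approximable with constant `γ`. -/
def BApprox (v : LaurentSeries F) (γ : ℤ) : Prop :=
  ∀ z y : Polynomial F, y ≠ 0 →
    polyEmb F y * v - polyEmb F z ≠ 0 ∧
      (polyEmb F y * v - polyEmb F z).order ≤ (y.natDegree : ℤ) + γ

lemma hasBoundedPQ_of_BApprox {v : LaurentSeries F} (hv : IsIrrational F v) {γ : ℤ}
    (hba : BApprox v γ) : HasBoundedPQ F v := by
  have cf := mkCF v hv
  refine ⟨cf, max (cf.p 0).natDegree γ.toNat, ?_⟩
  intro i
  cases i with
  | zero => exact le_max_left _ _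
  | succ n =>
    obtain ⟨hbne, hbdeg⟩ := (convDen_spec cf n).1
    have hEE : EE cf (n+1) = polyEmb F (convDen cf.p n) * v - polyEmb F (convNum cf.p n) := rfl
    have h2 := (hba (convNum cf.p n) (convDen cf.p n) hbne).2
    rw [← hEE] at h2
    rw [order_EE cf (n+1), SB_succ] at h2
    have h4 := dU_pos cf n
    obtain ⟨hp, hdp⟩ := p_succ_spec cf n
    have h5 : ((cf.p (n+1)).natDegree : ℤ) ≤ γ := by omega
    refine le_trans (by omega) (le_max_right (cf.p 0).natDegree γ.toNat)

lemma BApprox_of_bounded {w : LaurentSeries F} (hw : IsIrrational F w) (cf : CFExpansion F w)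
    (N : ℕ) (hN : ∀ i, (cf.p i).natDegree ≤ N) : BApprox w (N : ℤ) := by
  intro z y hy
  have hne : polyEmb F y * w - polyEmb F z ≠ 0 := by
    rw [sub_ne_zero, mul_comm]
    exact hw z y hy
  refine ⟨hne, ?_⟩
  have hex : ∃ m, (y.natDegree : ℤ) < SB cf m :=
    ⟨y.natDegree + 1, lt_of_lt_of_le (by push_cast; omega) (SB_ge cf _)⟩
  have hm1 : (y.natDegree : ℤ) < SB cf (Nat.find hex) := Nat.find_spec hex
  have hm0 : Nat.find hex ≠ 0 := by
    intro h0
    rw [h0] at hm1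
    simp [SB] at hm1
    omega
  obtain ⟨n, hmn⟩ : ∃ n, Nat.find hex = n + 1 := ⟨Nat.find hex - 1, by omega⟩
  rw [hmn] at hm1
  have hle : SB cf n ≤ (y.natDegree : ℤ) := by
    have hnm : n < Nat.find hex := by omega
    have h5 := Nat.find_min hex hnm
    omega
  have hδ := delta cf n
  set ε : Polynomial F := (-1) ^ n with hε_def
  have hε : ε * ε = 1 := by
    rw [hε_def, ← pow_add, ← two_mul, pow_mul]
    norm_num
  set s := ε * (y * convNum cf.p (n+1) - z * convDen cf.p (n+1)) with hs_def
  set t := ε * (z * convDen cf.p n - y * convNum cf.p n) with ht_def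
  have hyE : s * convDen cf.p n + t * convDen cf.p (n+1) = y := by
    rw [hs_def, ht_def]
    linear_combination (ε * y) * hδ + y * hε
  have hzE : s * convNum cf.p n + t * convNum cf.p (n+1) = z := by
    rw [hs_def, ht_def]
    linear_combination (ε * z) * hδ + z * hε
  have hyE' : polyEmb F s * polyEmb F (convDen cf.p n)
      + polyEmb F t * polyEmb F (convDen cf.p (n+1)) = polyEmb F y := by
    rw [← map_mul, ← map_mul, ← map_add, hyE]
  have hzE' : polyEmb F s * polyEmb F (convNum cf.p n)
      + polyEmb F t * polyEmb F (convNum cf.p (n+1)) = polyEmb F z := by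
    rw [← map_mul, ← map_mul, ← map_add, hzE]
  have hdecomp : polyEmb F y * w - polyEmb F z
      = polyEmb F s * EE cf (n+1) + polyEmb F t * EE cf (n+2) := by
    show _ = polyEmb F s * (polyEmb F (convDen cf.p n) * w - polyEmb F (convNum cf.p n))
      + polyEmb F t * (polyEmb F (convDen cf.p (n+1)) * w - polyEmb F (convNum cf.p (n+1)))
    linear_combination (-w) * hyE' + hzE'
  obtain ⟨hbn0, hbnd⟩ := (convDen_spec cf n).1
  obtain ⟨hbn10, hbn1d⟩ := (convDen_spec cf n).2
  have hdUp1 : dU cf (n+1) ≤ (N : ℤ) := by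
    obtain ⟨hp, hdp⟩ := p_succ_spec cf n
    have := hN (n+1)
    omega
  have hdU1 := dU_pos cf n
  have hdU2 : 1 ≤ dU cf (n+2) := dU_pos cf (n+1)
  have hSB1 := SB_succ cf n
  have hSB2 : SB cf (n+2) = SB cf (n+1) + dU cf (n+2) := SB_succ cf (n+1)
  by_cases ht0 : t = 0
  · have hybn : s * convDen cf.p n = y := by
      have h6 := hyE
      rwa [ht0, zero_mul, add_zero] at h6
    have hs0 : s ≠ 0 := fun h => hy (by rw [← hybn, h, zero_mul])
    have hds : y.natDegree = s.natDegree + (convDen cf.p n).natDegree := by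
      rw [← hybn, Polynomial.natDegree_mul hs0 hbn0]
    rw [hdecomp, ht0, map_zero, zero_mul, add_zero,
      HahnSeries.order_mul (polyEmb_ne_zero hs0) (EE_ne cf (n+1)), order_polyEmb hs0, order_EE]
    push_cast [hds]
    omega
  · by_cases hs0 : s = 0
    · exfalso
      have hybn : t * convDen cf.p (n+1) = y := by
        have h6 := hyE
        rwa [hs0, zero_mul, zero_add] at h6
      have hdt : y.natDegree = t.natDegree + (convDen cf.p (n+1)).natDegree := by
        rw [← hybn, Polynomial.natDegree_mul ht0 hbn10]
      push_cast [hdt] at hm1 hbn1d ⊢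
      omega
    · have hdeq : (s * convDen cf.p n).natDegree = (t * convDen cf.p (n+1)).natDegree := by
        rcases lt_trichotomy ((s * convDen cf.p n).natDegree)
          ((t * convDen cf.p (n+1)).natDegree) with h | h | h
        · exfalso
          have h7 := Polynomial.natDegree_add_eq_right_of_natDegree_lt h
          rw [hyE, Polynomial.natDegree_mul ht0 hbn10] at h7
          push_cast [h7] at hm1
          omega
        · exact h
        · exfalso
          have h7 := Polynomial.natDegree_add_eq_left_of_natDegree_lt h
          rw [hyE, Polynomial.natDegree_mul hs0 hbn0] at h7
          rw [Polynomial.natDegree_mul hs0 hbn0, Polynomial.natDegree_mul ht0 hbn10] at h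
          have hc1 : ((y.natDegree : ℤ)) = (s.natDegree : ℤ) + (convDen cf.p n).natDegree := by
            push_cast [h7]; ring
          have hc2 : ((t.natDegree : ℤ)) + (convDen cf.p (n+1)).natDegree
              < (s.natDegree : ℤ) + (convDen cf.p n).natDegree := by exact_mod_cast h
          omega
      have hrel : (s.natDegree : ℤ) + SB cf n = (t.natDegree : ℤ) + SB cf (n+1) := by
        have e1 : (s * convDen cf.p n).natDegree = s.natDegree + (convDen cf.p n).natDegree :=
          Polynomial.natDegree_mul hs0 hbn0
        have e2 : (t * convDen cf.p (n+1)).natDegree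
            = t.natDegree + (convDen cf.p (n+1)).natDegree :=
          Polynomial.natDegree_mul ht0 hbn10
        have hc : ((s.natDegree : ℤ)) + (convDen cf.p n).natDegree
            = (t.natDegree : ℤ) + (convDen cf.p (n+1)).natDegree := by
          rw [e1] at hdeq
          rw [e2] at hdeq
          exact_mod_cast congrArg (Nat.cast : ℕ → ℤ) hdeq
        omega
      have ho1 : (polyEmb F s * EE cf (n+1)).order = -(s.natDegree : ℤ) + SB cf (n+1) := by
        rw [HahnSeries.order_mul (polyEmb_ne_zero hs0) (EE_ne cf (n+1)), order_polyEmb hs0,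
          order_EE]
      have ho2 : (polyEmb F t * EE cf (n+2)).order = -(t.natDegree : ℤ) + SB cf (n+2) := by
        rw [HahnSeries.order_mul (polyEmb_ne_zero ht0) (EE_ne cf (n+2)), order_polyEmb ht0,
          order_EE]
      have hlt2 : (polyEmb F s * EE cf (n+1)).order < (polyEmb F t * EE cf (n+2)).order := by
        rw [ho1, ho2]
        omega
      obtain ⟨hne2, heq2⟩ := order_add_left
        (mul_ne_zero (polyEmb_ne_zero hs0) (EE_ne cf (n+1)))
        (mul_ne_zero (polyEmb_ne_zero ht0) (EE_ne cf (n+2))) hlt2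
      rw [hdecomp, heq2, ho1]
      omega

end MainCF
section Transfer

variable {F : Type*} [Field F]

lemma BApprox_transfer {u v : LaurentSeries F}
    (hu_irr : IsIrrational F u) (hv_irr : IsIrrational F v)
    {N : ℤ} (hN0 : 0 ≤ N) (hba : BApprox u N)
    {a₀ a₁ a₂ a₃ : Polynomial F} (ha₃ : a₃ ≠ 0)
    (hcube : polyEmb F a₀ + polyEmb F a₁ * u + polyEmb F a₂ * u ^ 2 + polyEmb F a₃ * u ^ 3 = 0)
    {a b c d : Polynomial F} (hd : d ≠ 0)
    (hv : polyEmb F d * v = polyEmb F a + polyEmb F b * u + polyEmb F c * u ^ 2) :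
    ∃ γ : ℤ, 0 ≤ γ ∧ BApprox v γ := by
  have hv0 : v ≠ 0 := irr_ne_zero hv_irr
  have hbc : ¬(b = 0 ∧ c = 0) := by
    rintro ⟨rfl, rfl⟩
    apply hv_irr a d hd
    rw [mul_comm, hv, map_zero, zero_mul, zero_mul, add_zero, add_zero]
  set α := c * a₃ with hα
  set β := c * a₂ - b * a₃ with hβ
  set m := polyEmb F α * u + polyEmb F β with hm_def
  have hm : m ≠ 0 := by
    by_cases hc : c = 0
    · have hb : b ≠ 0 := fun h => hbc ⟨h, hc⟩
      have hm2 : m = polyEmb F β := by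
        rw [hm_def, hα, hc, zero_mul, map_zero, zero_mul, zero_add]
      rw [hm2]
      apply polyEmb_ne_zero
      rw [hβ, hc, zero_mul, zero_sub]
      exact neg_ne_zero.mpr (mul_ne_zero hb ha₃)
    · intro h0
      apply hu_irr (-β) α (mul_ne_zero hc ha₃)
      rw [map_neg, mul_comm]
      rw [hm_def] at h0
      linear_combination h0
  set KV : ℤ := max (-v.order) 0 with hKV
  set KA : ℤ := max (KV + (d.natDegree : ℤ)) (a.natDegree : ℤ) with hKA
  set KS : ℤ := max ((a₃*(b*c*a₂ - b^2*a₃ - c^2*a₁)).natDegree : ℤ)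
      (KA + ((c*a₃^2).natDegree : ℤ)) with hKS
  have hKV0 : 0 ≤ KV := le_max_right _ _
  have hKA0 : 0 ≤ KA := le_trans (Int.natCast_nonneg _) (le_max_right _ _)
  have hKS0 : 0 ≤ KS := le_trans (Int.natCast_nonneg _) (le_max_left _ _)
  refine ⟨max (KS + N + (a₃.natDegree : ℤ) + (d.natDegree : ℤ) - m.order) 0,
    le_max_right _ _, ?_⟩
  intro z y hy
  set G := polyEmb F y * v - polyEmb F z with hG_def
  have hGne : G ≠ 0 := by
    rw [hG_def, sub_ne_zero, mul_comm]
    exact hv_irr z y hy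
  refine ⟨hGne, ?_⟩
  by_cases hG : G.order ≤ (y.natDegree : ℤ)
  · have h1 := le_max_right (KS + N + (a₃.natDegree : ℤ) + (d.natDegree : ℤ) - m.order) (0 : ℤ)
    omega
  · push_neg at hG
    have hyne := polyEmb_ne_zero hy
    have hydeg : (0:ℤ) ≤ (y.natDegree : ℤ) := Int.natCast_nonneg _
    have hz : (z.natDegree : ℤ) ≤ (y.natDegree : ℤ) + KV := by
      by_cases hz0 : z = 0
      · rw [hz0, Polynomial.natDegree_zero]
        push_cast
        omega
      · have hzne := polyEmb_ne_zero hz0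
        have hsum : polyEmb F y * v + -G = polyEmb F z := by rw [hG_def]; ring
        have h8 := HahnSeries.min_order_le_order_add (x := polyEmb F y * v) (y := -G)
          (by rw [hsum]; exact hzne)
        rw [hsum, order_polyEmb hz0, HahnSeries.order_neg] at h8
        have h9 : (polyEmb F y * v).order = -(y.natDegree : ℤ) + v.order := by
          rw [HahnSeries.order_mul hyne hv0, order_polyEmb hy]
        rw [h9] at h8
        have h10 : -v.order ≤ KV := le_max_left _ _
        omega
    set A' := z * d - y * a with hA'
    set s' := y * (a₃*(b*c*a₂ - b^2*a₃ - c^2*a₁)) - A' * (c*a₃^2) with hs'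
    set t' := -(A' * (a₃*(c*a₂ - b*a₃))) - y * (c^2*a₃*a₀) with ht'
    have hkey : polyEmb F a₃ * (polyEmb F d * G) * m = polyEmb F s' * u + polyEmb F t' := by
      simp only [hs', ht', hA', hα, hβ, hm_def, hG_def, map_mul, map_sub, map_add, map_neg,
        map_pow]
      linear_combination (polyEmb F a₃ * (polyEmb F c * polyEmb F a₃ * u
          + (polyEmb F c * polyEmb F a₂ - polyEmb F b * polyEmb F a₃)) * polyEmb F y) * hv
        + (polyEmb F c * polyEmb F y * (polyEmb F c * polyEmb F a₃)) * hcube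
    have hSTne : polyEmb F s' * u + polyEmb F t' ≠ 0 := by
      rw [← hkey]
      exact mul_ne_zero (mul_ne_zero (polyEmb_ne_zero ha₃)
        (mul_ne_zero (polyEmb_ne_zero hd) hGne)) hm
    have hordL : (polyEmb F s' * u + polyEmb F t').order
        = -(a₃.natDegree : ℤ) + (-(d.natDegree : ℤ) + G.order) + m.order := by
      rw [← hkey,
        HahnSeries.order_mul (mul_ne_zero (polyEmb_ne_zero ha₃)
          (mul_ne_zero (polyEmb_ne_zero hd) hGne)) hm,
        HahnSeries.order_mul (polyEmb_ne_zero ha₃) (mul_ne_zero (polyEmb_ne_zero hd) hGne),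
        HahnSeries.order_mul (polyEmb_ne_zero hd) hGne, order_polyEmb ha₃, order_polyEmb hd]
    have hordR : (polyEmb F s' * u + polyEmb F t').order ≤ (y.natDegree : ℤ) + KS + N := by
      by_cases hs'0 : s' = 0
      · rw [hs'0, map_zero, zero_mul, zero_add] at hSTne ⊢
        have ht'0 : t' ≠ 0 := fun h => hSTne (by rw [h, map_zero])
        rw [order_polyEmb ht'0]
        have := Int.natCast_nonneg t'.natDegree
        omega
      · have hb2 := (hba (-t') s' hs'0).2
        rw [map_neg, sub_neg_eq_add] at hb2
        have hA'd : (A'.natDegree : ℤ) ≤ (y.natDegree : ℤ) + KA := by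
          have h1 := Polynomial.natDegree_sub_le (z*d) (y*a)
          have h2 := Polynomial.natDegree_mul_le (p := z) (q := d)
          have h3 := Polynomial.natDegree_mul_le (p := y) (q := a)
          have h4 : KV + (d.natDegree : ℤ) ≤ KA := le_max_left _ _
          have h5 : (a.natDegree : ℤ) ≤ KA := le_max_right _ _
          rw [← hA'] at h1
          push_cast at h1 h2 h3
          omega
        have hs'd : (s'.natDegree : ℤ) ≤ (y.natDegree : ℤ) + KS := by
          have h1 := Polynomial.natDegree_sub_le (y * (a₃*(b*c*a₂ - b^2*a₃ - c^2*a₁)))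
            (A' * (c*a₃^2))
          have h2 := Polynomial.natDegree_mul_le (p := y) (q := a₃*(b*c*a₂ - b^2*a₃ - c^2*a₁))
          have h3 := Polynomial.natDegree_mul_le (p := A') (q := c*a₃^2)
          have h4 : ((a₃*(b*c*a₂ - b^2*a₃ - c^2*a₁)).natDegree : ℤ) ≤ KS := le_max_left _ _
          have h5 : KA + ((c*a₃^2).natDegree : ℤ) ≤ KS := le_max_right _ _
          rw [← hs'] at h1
          push_cast at h1 h2 h3
          omega
        omega
    have hmax := le_max_left (KS + N + (a₃.natDegree : ℤ) + (d.natDegree : ℤ) - m.order) (0 : ℤ)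
    omega

end Transfer
/-- if `u` is algebraic of degree 3 over `F(x)` (it satisfies a cubic and no
nontrivial relation of degree ≤ 2) and has bounded partial quotients, then every
irrational element `v` of `F(x)(u)` (i.e. `v = (a + b·u + c·u²)/d`) has bounded partial
quotients. -/
theorem statement6 (F : Type*) [Field F] (u : LaurentSeries F)
    (hcubic : ∃ a₀ a₁ a₂ a₃ : Polynomial F, a₃ ≠ 0 ∧
      polyEmb F a₀ + polyEmb F a₁ * u + polyEmb F a₂ * u ^ 2 + polyEmb F a₃ * u ^ 3 = 0)
    (hmin : ∀ b₀ b₁ b₂ : Polynomial F,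
      polyEmb F b₀ + polyEmb F b₁ * u + polyEmb F b₂ * u ^ 2 = 0 → b₀ = 0 ∧ b₁ = 0 ∧ b₂ = 0)
    (hbd : HasBoundedPQ F u) :
    ∀ v : LaurentSeries F,
      (∃ a b c d : Polynomial F, d ≠ 0 ∧
        polyEmb F d * v = polyEmb F a + polyEmb F b * u + polyEmb F c * u ^ 2) →
      IsIrrational F v → HasBoundedPQ F v := by
  obtain ⟨a₀, a₁, a₂, a₃, ha₃, hcube⟩ := hcubic
  have hu_irr : IsIrrational F u := by
    intro p q hq heq
    have h0 : polyEmb F (-p) + polyEmb F q * u + polyEmb F 0 * u ^ 2 = 0 := by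
      rw [map_neg, map_zero, zero_mul, add_zero, mul_comm (polyEmb F q) u, heq]
      ring
    exact hq (hmin (-p) q 0 h0).2.1
  obtain ⟨cfu, N, hNu⟩ := hbd
  have hbau := BApprox_of_bounded hu_irr cfu N hNu
  intro v hvrep hvirr
  obtain ⟨a, b, c, d, hd, hv⟩ := hvrep
  obtain ⟨γ, hγ0, hbav⟩ := BApprox_transfer hu_irr hvirr (Int.natCast_nonneg N) hbau ha₃ hcube hd hv
  exact hasBoundedPQ_of_BApprox hvirr hbav

end PaperCF
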